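/- Let A ∈ ℝ^{d₁×d₁} and B ∈ ℝ^{d₂×d₂} be symmetric and C ∈ ℝ^{d₁×d₂}. If B is negative definite and A − C B^{-1} Cᵀ is positive definite, then there exists γ₀ > 0 such that for every γ > γ₀, every complex eigenvalue λ of the block matrix J_γ = [[−(1/γ)A, −(1/γ)C], [Cᵀ, B]] satisfies Re(λ) < 0. (That is, every strict local minimax point of a twice-differentiable f is a strict linearly stable point of γ-GDA for all sufficiently large γ.) -/

import Mathlib

open Matrix

noncomputable section

namespace Stmt15Aux

def Q {ι : Type*} [Fintype ι] (x : ι → ℝ) : ℝ := ∑ i, x i ^ 2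

lemma Q_nonneg {ι : Type*} [Fintype ι] (x : ι → ℝ) : 0 ≤ Q x :=
  Finset.sum_nonneg fun i _ => sq_nonneg _

lemma Q_eq_zero {ι : Type*} [Fintype ι] {x : ι → ℝ} (h : Q x = 0) : x = 0 := by
  funext i
  have := (Finset.sum_eq_zero_iff_of_nonneg (fun i _ => sq_nonneg (x i))).1 h i (Finset.mem_univ i)
  exact pow_eq_zero_iff (by norm_num) |>.1 this

lemma Q_pos {ι : Type*} [Fintype ι] {x : ι → ℝ} (hx : x ≠ 0) : 0 < Q x :=
  lt_of_le_of_ne (Q_nonneg x) fun h => hx (Q_eq_zero h.symm)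

lemma abs_le_sqrt_Q {ι : Type*} [Fintype ι] (x : ι → ℝ) (i : ι) : |x i| ≤ Real.sqrt (Q x) := by
  have : x i ^ 2 ≤ Q x := Finset.single_le_sum (fun i _ => sq_nonneg (x i)) (Finset.mem_univ i)
  calc |x i| = Real.sqrt (x i ^ 2) := (Real.sqrt_sq_eq_abs _).symm
  _ ≤ _ := Real.sqrt_le_sqrt this

lemma bil {ι κ : Type*} [Fintype ι] [Fintype κ] (M : Matrix ι κ ℝ) (x : ι → ℝ) (y : κ → ℝ) :
    |x ⬝ᵥ M *ᵥ y| ≤ (∑ i, ∑ j, |M i j|) * (Real.sqrt (Q x) * Real.sqrt (Q y)) := by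
  have h1 : x ⬝ᵥ M *ᵥ y = ∑ i, ∑ j, x i * (M i j * y j) := by
    simp [dotProduct, mulVec, Finset.mul_sum]
  rw [h1, Finset.sum_mul]
  refine (Finset.abs_sum_le_sum_abs _ _).trans (Finset.sum_le_sum fun i _ => ?_)
  rw [Finset.sum_mul]
  refine (Finset.abs_sum_le_sum_abs _ _).trans (Finset.sum_le_sum fun j _ => ?_)
  rw [abs_mul, abs_mul]
  have hp : |x i| * |y j| ≤ Real.sqrt (Q x) * Real.sqrt (Q y) :=
    mul_le_mul (abs_le_sqrt_Q x i) (abs_le_sqrt_Q y j) (abs_nonneg _) (Real.sqrt_nonneg _)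
  have hp2 := mul_le_mul_of_nonneg_left hp (abs_nonneg (M i j))
  nlinarith [hp2]

lemma coercive {n : ℕ} {S : Matrix (Fin n) (Fin n) ℝ} (hS : S.PosDef) :
    ∃ s > (0:ℝ), ∀ x : Fin n → ℝ, s * Q x ≤ x ⬝ᵥ S *ᵥ x := by
  have hpos : ∀ x : Fin n → ℝ, x ≠ 0 → 0 < x ⬝ᵥ S *ᵥ x := by
    intro x hx
    simpa using hS.dotProduct_mulVec_pos hx
  have hcont : Continuous fun x : Fin n → ℝ => x ⬝ᵥ S *ᵥ x := by
    simp only [dotProduct, mulVec]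
    fun_prop
  rcases n with - | n
  · exact ⟨1, one_pos, fun x => by simp [Q, dotProduct]⟩
  set K : Set (Fin (n+1) → ℝ) := {x | Q x = 1} with hK
  have hQcont : Continuous (Q : (Fin (n+1) → ℝ) → ℝ) := by
    unfold Q; fun_prop
  have hclosed : IsClosed K := isClosed_eq hQcont continuous_const
  have hsub : K ⊆ Metric.closedBall 0 1 := by
    intro x hx
    rw [Metric.mem_closedBall, dist_zero_right]
    refine pi_norm_le_iff_of_nonneg zero_le_one |>.2 fun i => ?_
    rw [Real.norm_eq_abs, ← Real.sqrt_one]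
    calc |x i| ≤ Real.sqrt (Q x) := abs_le_sqrt_Q x i
    _ = Real.sqrt 1 := by rw [hx]
  have hcpt : IsCompact K :=
    (isCompact_closedBall (0 : Fin (n+1) → ℝ) 1).of_isClosed_subset hclosed hsub
  have hne : K.Nonempty := by
    refine ⟨Pi.single 0 1, ?_⟩
    show Q _ = 1
    simp [Q, Pi.single_apply]
  obtain ⟨x₀, hx₀K, hmin⟩ := hcpt.exists_isMinOn hne hcont.continuousOn
  have hx₀ne : x₀ ≠ 0 := by
    intro h
    have : Q x₀ = 1 := hx₀K
    rw [h] at this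
    simp [Q] at this
  refine ⟨x₀ ⬝ᵥ S *ᵥ x₀, hpos _ hx₀ne, fun x => ?_⟩
  by_cases hx : x = 0
  · simp [hx, Q, dotProduct]
  have hQx : 0 < Q x := Q_pos hx
  set r := Real.sqrt (Q x) with hr
  have hrpos : 0 < r := Real.sqrt_pos.2 hQx
  set u : Fin (n+1) → ℝ := r⁻¹ • x with hu
  have hQu : Q u = 1 := by
    have h1 : Q u = (r⁻¹) ^ 2 * Q x := by
      simp [Q, hu, Finset.mul_sum, mul_pow]
    rw [h1, inv_pow, hr, Real.sq_sqrt hQx.le, inv_mul_cancel₀ hQx.ne']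
  have hle : x₀ ⬝ᵥ S *ᵥ x₀ ≤ u ⬝ᵥ S *ᵥ u := hmin hQu
  have hxu : x = r • u := by
    rw [hu, smul_inv_smul₀ hrpos.ne']
  have hquad : x ⬝ᵥ S *ᵥ x = r ^ 2 * (u ⬝ᵥ S *ᵥ u) := by
    rw [hxu, smul_dotProduct, mulVec_smul, dotProduct_smul]
    simp [smul_eq_mul]; ring
  have hr2 : r ^ 2 = Q x := Real.sq_sqrt hQx.le
  rw [hquad, ← hr2]
  calc x₀ ⬝ᵥ S *ᵥ x₀ * r ^ 2 ≤ (u ⬝ᵥ S *ᵥ u) * r ^ 2 :=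
        mul_le_mul_of_nonneg_right hle (sq_nonneg r)
  _ = r ^ 2 * (u ⬝ᵥ S *ᵥ u) := mul_comm _ _

end Stmt15Aux

lemma exists_eigenvector {n : Type*} [Fintype n] [DecidableEq n] (M : Matrix n n ℂ) {lam : ℂ}
    (h : M.charpoly.IsRoot lam) : ∃ v, v ≠ 0 ∧ M *ᵥ v = lam • v := by
  have hcm : (charmatrix M).map (Polynomial.evalRingHom lam) = lam • (1 : Matrix n n ℂ) - M := by
    ext i j
    by_cases hij : i = j
    · subst hij
      simp [Matrix.map_apply, charmatrix_apply_eq, Matrix.one_apply]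
    · simp [Matrix.map_apply, charmatrix_apply_ne _ _ _ hij, Matrix.one_apply, hij]
  have hdet : (lam • (1 : Matrix n n ℂ) - M).det = 0 := by
    rw [← hcm, ← RingHom.mapMatrix_apply, ← RingHom.map_det]
    simpa [Matrix.charpoly] using h
  obtain ⟨v, hv, hMv⟩ := Matrix.exists_mulVec_eq_zero_iff.2 hdet
  refine ⟨v, hv, ?_⟩
  rw [sub_mulVec, smul_mulVec, one_mulVec, sub_eq_zero] at hMv
  exact hMv.symm

open Stmt15Aux

set_option maxHeartbeats 1000000 in
/-- Every strict local minimax point is a strict linearly stable point of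
`γ-GDA` for all sufficiently large `γ`: if `A`, `B` are symmetric, `B` is
negative definite and the Schur complement `A - C B⁻¹ Cᵀ` is positive
definite, then there is `γ₀ > 0` such that for every `γ > γ₀`, every complex
eigenvalue `λ` of `J_γ = [[-(1/γ)A, -(1/γ)C], [Cᵀ, B]]` has `Re λ < 0`. -/
theorem stmt_15 {d₁ d₂ : ℕ}
    (A : Matrix (Fin d₁) (Fin d₁) ℝ) (B : Matrix (Fin d₂) (Fin d₂) ℝ)
    (C : Matrix (Fin d₁) (Fin d₂) ℝ)
    (hA : A.IsSymm) (hB : (-B).PosDef)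
    (hschur : (A - C * B⁻¹ * Cᵀ).PosDef) :
    ∃ γ₀ > (0 : ℝ), ∀ γ > γ₀, ∀ lam : ℂ,
      ((Matrix.fromBlocks ((-(1 / γ)) • A) ((-(1 / γ)) • C) Cᵀ B).map
          fun r : ℝ => (r : ℂ)).charpoly.IsRoot lam →
        lam.re < 0 := by
  -- B is invertible
  have hBdet : IsUnit B.det := by
    have h1 := hB.det_pos
    rw [Matrix.det_neg] at h1
    refine isUnit_iff_ne_zero.2 fun h => ?_
    rw [h, mul_zero] at h1
    exact lt_irrefl _ h1
  set S : Matrix (Fin d₁) (Fin d₁) ℝ := A - C * B⁻¹ * Cᵀ with hSdef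
  set P : Matrix (Fin d₂) (Fin d₁) ℝ := B⁻¹ * Cᵀ with hPdef
  have hBP : B * P = Cᵀ := by
    rw [hPdef, ← Matrix.mul_assoc, Matrix.mul_nonsing_inv B hBdet, Matrix.one_mul]
  have hAS : A = S + C * P := by
    rw [hSdef, hPdef, ← Matrix.mul_assoc, sub_add_cancel]
  -- coercivity constants
  obtain ⟨s, hs, hScoer⟩ := coercive hschur
  obtain ⟨b, hb, hBcoer⟩ := coercive hB
  set c₁ : ℝ := ∑ i, ∑ j, |C i j| with hc₁def
  set c₂ : ℝ := ∑ i, ∑ j, |(P * S) i j| with hc₂def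
  set c₃ : ℝ := ∑ i, ∑ j, |(P * C) i j| with hc₃def
  have hc₁ : 0 ≤ c₁ := Finset.sum_nonneg fun i _ => Finset.sum_nonneg fun j _ => abs_nonneg _
  have hc₂ : 0 ≤ c₂ := Finset.sum_nonneg fun i _ => Finset.sum_nonneg fun j _ => abs_nonneg _
  have hc₃ : 0 ≤ c₃ := Finset.sum_nonneg fun i _ => Finset.sum_nonneg fun j _ => abs_nonneg _
  set t : ℝ := c₁ + c₂ + 1 with htdef
  have ht : 0 < t := by positivity
  set rr : ℝ := t ^ 2 / (2 * s) with hrrdef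
  have hrr : 0 ≤ rr := by positivity
  set X : ℝ := rr + c₃ + 1 with hXdef
  have hX : 0 < X := by positivity
  refine ⟨max 1 (2 * X / b), lt_of_lt_of_le one_pos (le_max_left _ _), fun γ hγ lam hroot => ?_⟩
  have hγ1 : 1 < γ := lt_of_le_of_lt (le_max_left _ _) hγ
  have hγpos : 0 < γ := lt_trans one_pos hγ1
  set g : ℝ := 1 / γ with hgdef
  have hg : 0 < g := by positivity
  have hgG : γ⁻¹ = g := by rw [hgdef, one_div]
  have hkey : g * X < b / 2 := by
    have h2X : 2 * X < γ * b := by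
      have := lt_of_le_of_lt (le_max_right 1 (2 * X / b)) hγ
      rw [div_lt_iff₀ hb] at this
      linarith
    rw [hgdef, one_div, inv_mul_eq_div, div_lt_div_iff₀ hγpos two_pos]
    linarith
  -- matrices
  set J : Matrix (Fin d₁ ⊕ Fin d₂) (Fin d₁ ⊕ Fin d₂) ℝ :=
    Matrix.fromBlocks ((-(1 / γ)) • A) ((-(1 / γ)) • C) Cᵀ B with hJdef
  set K : Matrix (Fin d₁ ⊕ Fin d₂) (Fin d₁ ⊕ Fin d₂) ℝ :=
    Matrix.fromBlocks ((-g) • S) ((-g) • C) ((-g) • (P * S)) (B - g • (P * C)) with hKdef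
  set T : Matrix (Fin d₁ ⊕ Fin d₂) (Fin d₁ ⊕ Fin d₂) ℝ :=
    Matrix.fromBlocks 1 0 P 1 with hTdef
  set Ti : Matrix (Fin d₁ ⊕ Fin d₂) (Fin d₁ ⊕ Fin d₂) ℝ :=
    Matrix.fromBlocks 1 0 (-P) 1 with hTidef
  have hTiT : Ti * T = 1 := by
    rw [hTidef, hTdef, Matrix.fromBlocks_multiply]
    simp [Matrix.fromBlocks_one]
  have hTJ : T * J = K * T := by
    rw [hTdef, hJdef, hKdef, Matrix.fromBlocks_multiply, Matrix.fromBlocks_multiply,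
      Matrix.fromBlocks_inj]
    refine ⟨?_, ?_, ?_, ?_⟩ <;>
    · simp only [hgdef, one_div, hAS, Matrix.one_mul, Matrix.zero_mul, Matrix.mul_zero,
        Matrix.mul_one, add_zero, zero_add, Matrix.smul_mul, Matrix.mul_smul, Matrix.sub_mul,
        Matrix.mul_add, Matrix.add_mul, smul_add, neg_smul, Matrix.neg_mul, Matrix.mul_neg,
        smul_neg, neg_add, Matrix.mul_assoc, hBP]
      try abel
  -- quadratic form bound
  have hquad : ∀ x : Fin d₁ ⊕ Fin d₂ → ℝ, x ≠ 0 → x ⬝ᵥ K *ᵥ x < 0 := by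
    intro x hx
    set u : Fin d₁ → ℝ := x ∘ Sum.inl with hudef
    set v : Fin d₂ → ℝ := x ∘ Sum.inr with hvdef
    have hxe : x = Sum.elim u v := (Sum.elim_comp_inl_inr x).symm
    have hform : x ⬝ᵥ K *ᵥ x =
        -(g * (u ⬝ᵥ S *ᵥ u)) - g * (u ⬝ᵥ C *ᵥ v) - g * (v ⬝ᵥ (P * S) *ᵥ u)
          + (v ⬝ᵥ B *ᵥ v - g * (v ⬝ᵥ (P * C) *ᵥ v)) := by
      rw [hxe, hKdef, Matrix.fromBlocks_mulVec, sumElim_dotProduct_sumElim]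
      simp only [Matrix.smul_mulVec, Matrix.sub_mulVec, dotProduct_add,
        dotProduct_smul, dotProduct_sub, smul_eq_mul, neg_smul, neg_mul,
        dotProduct_neg, Sum.elim_comp_inl, Sum.elim_comp_inr, Matrix.neg_mulVec]
      ring
    have hQu := Q_nonneg u
    have hQv := Q_nonneg v
    have hQsum : 0 < Q u + Q v := by
      have : Q x = Q u + Q v := by
        rw [hxe]
        simp [Q, Fintype.sum_sum_type, hudef, hvdef]
      have := Q_pos hx
      linarith [Q_pos hx, this]
    set Nu : ℝ := Real.sqrt (Q u) with hNudef
    set Nv : ℝ := Real.sqrt (Q v) with hNvdef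
    have hNu : 0 ≤ Nu := Real.sqrt_nonneg _
    have hNv : 0 ≤ Nv := Real.sqrt_nonneg _
    have hNu2 : Nu ^ 2 = Q u := Real.sq_sqrt hQu
    have hNv2 : Nv ^ 2 = Q v := Real.sq_sqrt hQv
    have h1 : s * Q u ≤ u ⬝ᵥ S *ᵥ u := hScoer u
    have h2 : v ⬝ᵥ B *ᵥ v ≤ -(b * Q v) := by
      have := hBcoer v
      rw [Matrix.neg_mulVec, dotProduct_neg] at this
      linarith
    have h3 : |u ⬝ᵥ C *ᵥ v| ≤ c₁ * (Nu * Nv) := bil C u v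
    have h4 : |v ⬝ᵥ (P * S) *ᵥ u| ≤ c₂ * (Nv * Nu) := bil (P * S) v u
    have h5 : |v ⬝ᵥ (P * C) *ᵥ v| ≤ c₃ * (Nv * Nv) := bil (P * C) v v
    have hamgm : t * (Nu * Nv) ≤ s / 2 * Q u + rr * Q v := by
      rw [hrrdef, ← hNu2, ← hNv2]
      have key : s / 2 * Nu ^ 2 + t ^ 2 / (2 * s) * Nv ^ 2 - t * (Nu * Nv)
          = (s * Nu - t * Nv) ^ 2 / (2 * s) := by
        field_simp
        ring
      have h0 : 0 ≤ (s * Nu - t * Nv) ^ 2 / (2 * s) :=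
        div_nonneg (sq_nonneg _) (by positivity)
      linarith [key, h0]
    rw [hform]
    have e1 : -(g * (u ⬝ᵥ S *ᵥ u)) ≤ -(g * (s * Q u)) :=
      neg_le_neg (mul_le_mul_of_nonneg_left h1 hg.le)
    have e3 : -(g * (u ⬝ᵥ C *ᵥ v)) ≤ g * (c₁ * (Nu * Nv)) := by
      have h := mul_le_mul_of_nonneg_left ((neg_le_abs _).trans h3) hg.le
      rw [mul_neg] at h
      exact h
    have e4 : -(g * (v ⬝ᵥ (P * S) *ᵥ u)) ≤ g * (c₂ * (Nv * Nu)) := by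
      have h := mul_le_mul_of_nonneg_left ((neg_le_abs _).trans h4) hg.le
      rw [mul_neg] at h
      exact h
    have hNvsq : Nv * Nv = Q v := Real.mul_self_sqrt hQv
    have e5 : -(g * (v ⬝ᵥ (P * C) *ᵥ v)) ≤ g * (c₃ * Q v) := by
      rw [hNvsq] at h5
      have h := mul_le_mul_of_nonneg_left ((neg_le_abs _).trans h5) hg.le
      rw [mul_neg] at h
      exact h
    have hc12 : c₁ * (Nu * Nv) + c₂ * (Nv * Nu) ≤ t * (Nu * Nv) := by
      have hnn : 0 ≤ Nu * Nv := mul_nonneg hNu hNv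
      have h := mul_le_mul_of_nonneg_right (show c₁ + c₂ ≤ t by linarith [htdef]) hnn
      linarith [h]
    have hcg := mul_le_mul_of_nonneg_left hc12 hg.le
    have hcr := mul_le_mul_of_nonneg_left hamgm hg.le
    have hco : g * rr + g * c₃ + g ≤ b / 2 := by
      have hXe : g * X = g * rr + g * c₃ + g := by rw [hXdef]; ring
      linarith
    have hco2 := mul_le_mul_of_nonneg_right hco hQv
    have hM2 : 0 ≤ b * Q v := mul_nonneg hb.le hQv
    have hM3 : 0 ≤ g * Q v := mul_nonneg hg.le hQv
    have hM1 : 0 ≤ g * (s * Q u) := mul_nonneg hg.le (mul_nonneg hs.le hQu)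
    clear_value S P c₁ c₂ c₃ t rr X g u v Nu Nv
    rcases eq_or_lt_of_le hQv with hQv0 | hQvpos
    · have hQupos : 0 < Q u := by linarith
      have hgsQ : 0 < g * (s * Q u) := mul_pos hg (mul_pos hs hQupos)
      linarith [e1, e3, e4, e5, h2, hcg, hcr, hco2, hgsQ, hM2, hM3]
    · have hbQ : 0 < b * Q v := mul_pos hb hQvpos
      linarith [e1, e3, e4, e5, h2, hcg, hcr, hco2, hbQ, hM1, hM3]
  have hquad0 : ∀ x : Fin d₁ ⊕ Fin d₂ → ℝ, x ⬝ᵥ K *ᵥ x ≤ 0 := by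
    intro x
    by_cases hx : x = 0
    · simp [hx]
    · exact (hquad x hx).le
  -- eigenvector transfer
  obtain ⟨v, hv, hJv⟩ := exists_eigenvector ((J.map fun r : ℝ => (r : ℂ))) hroot
  have hmapmul : ∀ (M N : Matrix (Fin d₁ ⊕ Fin d₂) (Fin d₁ ⊕ Fin d₂) ℝ),
      ((M * N).map fun r : ℝ => (r : ℂ)) = (M.map fun r : ℝ => (r : ℂ)) * (N.map fun r : ℝ => (r : ℂ)) := by
    intro M N
    exact Matrix.map_mul (f := Complex.ofRealHom)
  set w : Fin d₁ ⊕ Fin d₂ → ℂ := (T.map fun r : ℝ => (r : ℂ)) *ᵥ v with hwdef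
  have hw0 : w ≠ 0 := by
    intro hw
    apply hv
    have : (Ti.map fun r : ℝ => (r : ℂ)) *ᵥ w = v := by
      rw [hwdef, Matrix.mulVec_mulVec, ← hmapmul, hTiT]
      simp [Matrix.map_one]
    rw [hw, Matrix.mulVec_zero] at this
    exact this.symm
  have hKw : (K.map fun r : ℝ => (r : ℂ)) *ᵥ w = lam • w := by
    rw [hwdef, Matrix.mulVec_mulVec, ← hmapmul, ← hTJ, hmapmul, ← Matrix.mulVec_mulVec, hJv,
      Matrix.mulVec_smul]
  set a : Fin d₁ ⊕ Fin d₂ → ℝ := fun i => (w i).re with hadef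
  set bb : Fin d₁ ⊕ Fin d₂ → ℝ := fun i => (w i).im with hbbdef
  have hre1 : (star w ⬝ᵥ ((K.map fun r : ℝ => (r : ℂ)) *ᵥ w)).re = lam.re * (Q a + Q bb) := by
    rw [hKw]
    simp only [dotProduct, Pi.smul_apply, Pi.star_apply, smul_eq_mul, Complex.re_sum]
    have : ∀ i, (star (w i) * (lam * w i)).re = lam.re * ((a i) ^ 2 + (bb i) ^ 2) := by
      intro i
      simp [Complex.star_def, Complex.mul_re, Complex.mul_im, hadef, hbbdef]
      ring
    rw [Finset.sum_congr rfl fun i _ => this i, ← Finset.mul_sum, Q, Q, Finset.sum_add_distrib]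
  have hre2 : (star w ⬝ᵥ ((K.map fun r : ℝ => (r : ℂ)) *ᵥ w)).re = a ⬝ᵥ K *ᵥ a + bb ⬝ᵥ K *ᵥ bb := by
    simp only [dotProduct, mulVec, Pi.star_apply, Matrix.map_apply, Finset.mul_sum,
      Complex.re_sum, ← Finset.sum_add_distrib]
    refine Finset.sum_congr rfl fun i _ => ?_
    refine Finset.sum_congr rfl fun j _ => ?_
    simp [Complex.star_def, Complex.mul_re, Complex.mul_im, hadef, hbbdef]
    try ring
  have hre : lam.re * (Q a + Q bb) = a ⬝ᵥ K *ᵥ a + bb ⬝ᵥ K *ᵥ bb := by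
    rw [← hre1]
    exact hre2
  have hab : a ≠ 0 ∨ bb ≠ 0 := by
    by_contra h
    push_neg at h
    apply hw0
    funext i
    have h1 : a i = 0 := by rw [h.1]; rfl
    have h2 : bb i = 0 := by rw [h.2]; rfl
    exact Complex.ext h1 h2
  have hQab : 0 < Q a + Q bb := by
    rcases hab with h | h
    · linarith [Q_pos h, Q_nonneg bb]
    · linarith [Q_pos h, Q_nonneg a]
  have hneg : a ⬝ᵥ K *ᵥ a + bb ⬝ᵥ K *ᵥ bb < 0 := by
    rcases hab with h | h
    · linarith [hquad a h, hquad0 bb]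
    · linarith [hquad bb h, hquad0 a]
  nlinarith [hre, hQab, hneg]
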